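/- For every even nonnegative integer ℓ, ∫_{−1}^{1} P_ℓ(y)/√(1−y²) dy = π·(ℓ!)² / (2^{2ℓ} · ((ℓ/2)!)⁴). -/

import Mathlib

open Real Finset Polynomial MeasureTheory

/-- The summand of the key combinatorial identity. -/
noncomputable def wzF (m j : ℕ) : ℝ :=
  (-1)^(m+j) * 4^m / 4^j * (Nat.factorial (2*m+2*j)) /
    ((Nat.factorial j : ℝ)^2 * (Nat.factorial (m-j) : ℝ) * (Nat.factorial (m+j) : ℝ))

/-- The WZ certificate. -/
noncomputable def wzG (m j : ℕ) : ℝ :=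
  8*(4*(m:ℝ)+3) * (-1)^(m+j) * 4^m / 4^j * j^2 * (Nat.factorial (2*m+2*j)) /
    ((Nat.factorial j : ℝ)^2 * (Nat.factorial (m+1-j) : ℝ) * (Nat.factorial (m+j) : ℝ))

lemma fact_ne (n : ℕ) : (Nat.factorial n : ℝ) ≠ 0 :=
  Nat.cast_ne_zero.2 (Nat.factorial_ne_zero n)

lemma wz_step (j a : ℕ) :
    ((j:ℝ)+a+1)^2 * wzF (j+a+1) j - 4*(2*((j:ℝ)+a)+1)^2 * wzF (j+a) j
      = wzG (j+a) (j+1) - wzG (j+a) j := by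
  simp only [wzF, wzG]
  rw [show j+a+1-j = a+1 from by omega, show j+a-j = a from by omega,
      show j+a+1-(j+1) = a from by omega,
      show 2*(j+a+1)+2*j = 2*(j+a)+2*j+1+1 from by omega,
      show 2*(j+a)+2*(j+1) = 2*(j+a)+2*j+1+1 from by omega,
      show j+a+(j+1) = j+a+j+1 from by omega,
      show (j+a+1)+j = j+a+j+1 from by omega]
  simp only [Nat.factorial_succ, pow_succ]
  push_cast
  field_simp [fact_ne]
  ring

lemma wz_boundary (m : ℕ) :
    ((m:ℝ)+1)^2 * wzF (m+1) (m+1) + wzG m (m+1) = 0 := by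
  simp only [wzF, wzG]
  rw [show 2*(m+1)+2*(m+1) = 2*m+2*m+1+1+1+1 from by omega,
      show 2*m+2*(m+1) = 2*m+2*m+1+1 from by omega,
      show m+1+(m+1) = m+m+1+1 from by omega,
      show m+(m+1) = m+m+1 from by omega]
  simp only [Nat.factorial_succ, pow_succ, Nat.factorial_zero]
  push_cast
  field_simp [fact_ne]
  ring

lemma wzG_zero (m : ℕ) : wzG m 0 = 0 := by simp [wzG]

lemma wz_sum (m : ℕ) :
    ∑ j ∈ range (m+1), wzF m j = ((Nat.choose (2*m) m : ℝ))^2 := by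
  induction m with
  | zero => simp [wzF, Nat.factorial]
  | succ m ih =>
    have key : ((m:ℝ)+1)^2 * ∑ j ∈ range (m+2), wzF (m+1) j
        = 4*(2*(m:ℝ)+1)^2 * ∑ j ∈ range (m+1), wzF m j := by
      rw [sum_range_succ, mul_add, mul_sum, mul_sum]
      have tele : ∑ j ∈ range (m+1),
          (((m:ℝ)+1)^2 * wzF (m+1) j - 4*(2*(m:ℝ)+1)^2 * wzF m j)
          = wzG m (m+1) - wzG m 0 := by
        rw [← Finset.sum_range_sub (wzG m) (m+1)]
        refine Finset.sum_congr rfl fun j hj => ?_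
        have hjm : j ≤ m := by simpa using Nat.lt_succ_iff.mp (mem_range.mp hj)
        obtain ⟨a, rfl⟩ : ∃ a, m = j + a := ⟨m - j, by omega⟩
        push_cast
        exact wz_step j a
      have := Finset.sum_sub_distrib (s := range (m+1))
        (f := fun j => ((m:ℝ)+1)^2 * wzF (m+1) j)
        (g := fun j => 4*(2*(m:ℝ)+1)^2 * wzF m j) ▸ tele
      rw [wzG_zero, sub_zero] at this
      have hb := wz_boundary m
      linarith [this]
    have hm1 : ((m:ℝ)+1)^2 ≠ 0 := by positivity
    have hcb : ((m+1) : ℝ) * (Nat.choose (2*(m+1)) (m+1) : ℝ)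
        = 2*(2*(m:ℝ)+1) * (Nat.choose (2*m) m : ℝ) := by
      have := Nat.succ_mul_centralBinom_succ m
      have : (((m+1) * (m+1).centralBinom : ℕ) : ℝ)
          = ((2 * (2*m+1) * m.centralBinom : ℕ) : ℝ) := by rw [this]
      push_cast [Nat.centralBinom] at this
      push_cast
      convert this using 3 <;> ring
    rw [ih] at key
    have target : ((m:ℝ)+1)^2 * ((Nat.choose (2*(m+1)) (m+1) : ℝ))^2
        = 4*(2*(m:ℝ)+1)^2 * ((Nat.choose (2*m) m : ℝ))^2 := by
      have := congrArg (fun x : ℝ => x^2) hcb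
      simp only [mul_pow] at this
      nlinarith [this]
    field_simp at key target ⊢
    nlinarith [key, target]

/-- Legendre polynomial of degree `l`, via Rodrigues' formula. -/
noncomputable def legendreP (l : ℕ) (y : ℝ) : ℝ :=
  (1 / (2 ^ l * (Nat.factorial l : ℝ))) *
    iteratedDeriv l (fun t : ℝ => (t ^ 2 - 1) ^ l) y

lemma cos_image_Ioo : Real.cos '' Set.Ioo 0 π = Set.Ioo (-1) 1 := by
  ext y
  constructor
  · rintro ⟨θ, hθ, rfl⟩
    have h0 : (0:ℝ) ∈ Set.Icc 0 π := ⟨le_refl _, Real.pi_pos.le⟩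
    have hπ : π ∈ Set.Icc 0 π := ⟨Real.pi_pos.le, le_refl _⟩
    have hθ' : θ ∈ Set.Icc 0 π := ⟨hθ.1.le, hθ.2.le⟩
    constructor
    · have := Real.strictAntiOn_cos hθ' hπ hθ.2
      simpa using this
    · have := Real.strictAntiOn_cos h0 hθ' hθ.1
      simpa using this
  · rintro ⟨hy1, hy2⟩
    refine ⟨Real.arccos y, ⟨Real.arccos_pos.2 hy2, ?_⟩, Real.cos_arccos hy1.le hy2.le⟩
    refine lt_of_le_of_ne (Real.arccos_le_pi y) fun h => ?_
    have := Real.cos_arccos hy1.le hy2.le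
    rw [h, Real.cos_pi] at this
    linarith

lemma integral_substitution (g : ℝ → ℝ) :
    (∫ y in (-1:ℝ)..1, g y) = ∫ θ in Set.Ioo 0 π, Real.sin θ * g (Real.cos θ) := by
  rw [intervalIntegral.integral_of_le (by norm_num : (-1:ℝ) ≤ 1),
    MeasureTheory.integral_Ioc_eq_integral_Ioo, ← cos_image_Ioo,
    integral_image_eq_integral_abs_deriv_smul measurableSet_Ioo
      (fun x _ => (Real.hasDerivAt_cos x).hasDerivWithinAt)
      (Real.strictAntiOn_cos.injOn.mono Set.Ioo_subset_Icc_self) g]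
  refine MeasureTheory.setIntegral_congr_fun measurableSet_Ioo fun θ hθ => ?_
  have hs : 0 ≤ Real.sin θ := (Real.sin_pos_of_pos_of_lt_pi hθ.1 hθ.2).le
  rw [smul_eq_mul, abs_neg, abs_of_nonneg hs]

lemma step1 (l : ℕ) :
    (∫ y in (-1:ℝ)..1, legendreP l y / Real.sqrt (1 - y^2))
      = ∫ θ in (0:ℝ)..π, legendreP l (Real.cos θ) := by
  rw [integral_substitution (fun y => legendreP l y / Real.sqrt (1 - y^2)),
    intervalIntegral.integral_of_le Real.pi_pos.le,
    MeasureTheory.integral_Ioc_eq_integral_Ioo]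
  refine MeasureTheory.setIntegral_congr_fun measurableSet_Ioo fun θ hθ => ?_
  have hs : 0 < Real.sin θ := Real.sin_pos_of_pos_of_lt_pi hθ.1 hθ.2
  have h1 : Real.sqrt (1 - Real.cos θ ^ 2) = Real.sin θ := by
    rw [← Real.sin_sq, Real.sqrt_sq hs.le]
  simp only [h1]
  field_simp

lemma iteratedDeriv_eval (p : Polynomial ℝ) (n : ℕ) :
    iteratedDeriv n (fun x => p.eval x) = fun x => (Polynomial.derivative^[n] p).eval x := by
  induction n with
  | zero => simp
  | succ n ih =>
    rw [iteratedDeriv_succ, ih, Function.iterate_succ_apply']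
    funext x
    exact Polynomial.deriv _

lemma legendreP_eq_sum (l : ℕ) (y : ℝ) :
    legendreP l y = (1 / (2^l * (Nat.factorial l : ℝ))) *
      ∑ k ∈ range (l+1), (-1:ℝ)^(l-k) * (Nat.choose l k : ℝ) *
        (Nat.descFactorial (2*k) l : ℝ) * y^(2*k-l) := by
  have hfun : (fun t : ℝ => (t^2-1)^l)
      = (fun t => Polynomial.eval t ((X^2 - 1 : Polynomial ℝ)^l)) := by
    funext t; simp
  rw [legendreP, hfun, iteratedDeriv_eval]
  congr 1
  have hexp : ((X^2 - 1 : Polynomial ℝ)^l)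
      = ∑ k ∈ range (l+1), Polynomial.C ((-1:ℝ)^(l-k) * (Nat.choose l k : ℝ)) * X^(2*k) := by
    rw [sub_eq_add_neg, add_pow]
    refine Finset.sum_congr rfl fun k _ => ?_
    rw [← pow_mul]
    simp only [map_mul, map_pow, map_neg, map_one, Polynomial.C_eq_natCast, map_natCast]
    ring
  rw [hexp, Polynomial.iterate_derivative_sum]
  simp only [Polynomial.eval_finset_sum]
  refine Finset.sum_congr rfl fun k _ => ?_
  rw [Polynomial.iterate_derivative_C_mul, Polynomial.iterate_derivative_X_pow_eq_natCast_mul]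
  simp
  ring

lemma prod_ratio_eq (n : ℕ) :
    (∏ i ∈ range n, ((2*(i:ℝ)+1)/(2*(i:ℝ)+2))) = (Nat.centralBinom n : ℝ)/4^n := by
  induction n with
  | zero => simp [Nat.centralBinom]
  | succ n ih =>
    rw [prod_range_succ, ih]
    have h := Nat.succ_mul_centralBinom_succ n
    have h' : ((n:ℝ)+1) * (Nat.centralBinom (n+1) : ℝ)
        = 2*(2*(n:ℝ)+1) * (Nat.centralBinom n : ℝ) := by
      exact_mod_cast congrArg (fun x : ℕ => (x : ℝ)) h
    have hn : ((n:ℝ)+1) ≠ 0 := by positivity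
    field_simp
    linear_combination (-2*(4:ℝ)^n) * h'

lemma integral_cos_pow_even' (n : ℕ) :
    (∫ x in (0:ℝ)..π, Real.cos x ^ (2*n)) = π * (Nat.centralBinom n : ℝ) / 4^n := by
  have hper : Function.Periodic (fun x : ℝ => Real.sin x ^ (2*n)) π := by
    intro x
    simp only [Real.sin_add_pi]
    exact Even.neg_pow (even_two_mul n) _
  have h1 : (∫ x in (0:ℝ)..π, Real.cos x ^ (2*n))
      = ∫ x in (0:ℝ)..π, Real.sin x ^ (2*n) := by
    calc (∫ x in (0:ℝ)..π, Real.cos x ^ (2*n))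
        = ∫ x in (0:ℝ)..π, Real.sin (x + π/2) ^ (2*n) := by
          refine intervalIntegral.integral_congr fun x _ => ?_
          rw [Real.sin_add_pi_div_two]
      _ = ∫ x in (0+π/2:ℝ)..(π+π/2), Real.sin x ^ (2*n) :=
          intervalIntegral.integral_comp_add_right (fun x => Real.sin x ^ (2*n)) (π/2)
      _ = ∫ x in (π/2:ℝ)..(π/2+π), Real.sin x ^ (2*n) := by
          rw [show (0:ℝ)+π/2 = π/2 from by ring, show π+π/2 = π/2+π from by ring]
      _ = ∫ x in (0:ℝ)..(0+π), Real.sin x ^ (2*n) := hper.intervalIntegral_add_eq (π/2) 0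
      _ = _ := by norm_num
  rw [h1, integral_sin_pow_even, prod_ratio_eq, mul_div_assoc]

lemma term_eq (m j : ℕ) (hj : j ≤ m) :
    (-1:ℝ)^(2*m-(m+j)) * ((2*m).choose (m+j) : ℝ) * ((2*(m+j)).descFactorial (2*m) : ℝ)
      * (π * (Nat.centralBinom j : ℝ)/4^j)
    = π * (((2*m).factorial : ℝ)/4^m) * wzF m j := by
  have h1 : ((2*m).choose (m+j) : ℝ)
      = ((2*m).factorial : ℝ) / (((m+j).factorial : ℝ) * ((m-j).factorial : ℝ)) := by
    rw [Nat.cast_choose ℝ (by omega : m+j ≤ 2*m), show 2*m-(m+j) = m-j from by omega]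
  have h2 : ((2*(m+j)).descFactorial (2*m) : ℝ)
      = ((2*m+2*j).factorial : ℝ) / ((2*j).factorial : ℝ) := by
    have h := Nat.factorial_mul_descFactorial (show 2*m ≤ 2*(m+j) from by omega)
    rw [show 2*(m+j) - 2*m = 2*j from by omega] at h
    have h' := congrArg (fun x : ℕ => (x:ℝ)) h
    push_cast at h'
    rw [show 2*(m+j) = 2*m+2*j from by omega] at h' ⊢
    field_simp
    linarith [h']
  have h3 : (Nat.centralBinom j : ℝ)
      = ((2*j).factorial : ℝ) / (((j).factorial : ℝ) * ((j).factorial : ℝ)) := by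
    rw [Nat.centralBinom, Nat.cast_choose ℝ (by omega : j ≤ 2*j), show 2*j - j = j from by omega]
  have h4 : (-1:ℝ)^(2*m-(m+j)) = (-1:ℝ)^(m+j) := by
    rw [show 2*m-(m+j) = m-j from by omega, show m+j = (m-j)+2*j from by omega, pow_add, pow_mul]
    norm_num
  rw [h1, h2, h3, h4, wzF]
  field_simp [fact_ne]

/-- For `ℓ` even, `∫_{-1}^1 P_ℓ(y)/√(1-y²) dy = π (ℓ!)² / (2^{2ℓ} ((ℓ/2)!)⁴)`. -/
theorem legendre_weighted_integral (l : ℕ) (hl : Even l) :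
    (∫ y in (-1 : ℝ)..1, legendreP l y / Real.sqrt (1 - y ^ 2)) =
      π * (Nat.factorial l : ℝ) ^ 2 /
        (2 ^ (2 * l) * (Nat.factorial (l / 2) : ℝ) ^ 4) := by
  obtain ⟨m, rfl⟩ : ∃ m, l = 2 * m := by
    obtain ⟨m, hm⟩ := hl; exact ⟨m, by omega⟩
  rw [show 2*m/2 = m from by omega]
  have hI : (∫ y in (-1:ℝ)..1, legendreP (2*m) y / Real.sqrt (1 - y^2))
      = (1 / (2^(2*m) * ((2*m).factorial : ℝ))) *
        ∑ k ∈ range (2*m+1), ((-1:ℝ)^(2*m-k) * ((2*m).choose k : ℝ)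
          * (Nat.descFactorial (2*k) (2*m) : ℝ))
          * ∫ θ in (0:ℝ)..π, Real.cos θ ^ (2*k-2*m) := by
    rw [step1,
      intervalIntegral.integral_congr (fun θ _ => legendreP_eq_sum (2*m) (Real.cos θ)),
      intervalIntegral.integral_const_mul]
    congr 1
    rw [intervalIntegral.integral_finset_sum (fun k _ => by
      apply Continuous.intervalIntegrable; fun_prop)]
    refine Finset.sum_congr rfl fun k _ => ?_
    rw [← intervalIntegral.integral_const_mul]
  rw [hI]
  have hzero : ∀ k ∈ range (2*m+1), k ∉ Finset.Ico m (2*m+1) →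
      ((-1:ℝ)^(2*m-k) * ((2*m).choose k : ℝ) * (Nat.descFactorial (2*k) (2*m) : ℝ))
        * (∫ θ in (0:ℝ)..π, Real.cos θ ^ (2*k-2*m)) = 0 := by
    intro k hk hk2
    have hkm : k < m := by
      simp only [Finset.mem_Ico, Finset.mem_range] at *
      omega
    have : Nat.descFactorial (2*k) (2*m) = 0 :=
      Nat.descFactorial_eq_zero_iff_lt.2 (by omega)
    rw [this]
    simp
  rw [← Finset.sum_subset (fun k hk => by
        simp only [Finset.mem_Ico, Finset.mem_range] at *; omega) hzero,
    Finset.sum_Ico_eq_sum_range, show 2*m+1-m = m+1 from by omega]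
  have hterm : ∀ j ∈ range (m+1),
      ((-1:ℝ)^(2*m-(m+j)) * ((2*m).choose (m+j) : ℝ)
        * (Nat.descFactorial (2*(m+j)) (2*m) : ℝ))
        * (∫ θ in (0:ℝ)..π, Real.cos θ ^ (2*(m+j)-2*m))
      = π * (((2*m).factorial : ℝ)/4^m) * wzF m j := by
    intro j hj
    have hjm : j ≤ m := by simpa using Nat.lt_succ_iff.mp (mem_range.mp hj)
    rw [show 2*(m+j)-2*m = 2*j from by omega, integral_cos_pow_even']
    rw [← term_eq m j hjm]
  rw [Finset.sum_congr rfl hterm, ← Finset.mul_sum, wz_sum]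
  have hch : ((2*m).choose m : ℝ) = ((2*m).factorial : ℝ) / (((m).factorial : ℝ)^2) := by
    rw [Nat.cast_choose ℝ (by omega : m ≤ 2*m), show 2*m - m = m from by omega]
    ring
  rw [hch]
  have h2 : (2:ℝ)^(2*(2*m)) = 2^(2*m) * 4^m := by
    rw [show (4:ℝ) = 2^2 from by norm_num, ← pow_mul, ← pow_add]
    congr 1
    ring
  rw [h2]
  field_simp [fact_ne]
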